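/- Let G be a bridgeless graph with d(G)=4 and let uv be an edge with l_G(uv) = g*(G) ≥ 6. Then every vertex w ∈ M' has exactly one neighbor in S_{3,3}, i.e. |N(w) ∩ S_{3,3}| = 1. -/

import Mathlib

/-- A multigraph: vertices `V`, edges `E`, each edge has two distinct endpoints. -/
structure Multigraph (V : Type*) (E : Type*) where
  ends : E → Sym2 V
  loopless : ∀ e, ¬ (ends e).IsDiag

namespace Multigraph

variable {V E : Type*}

/-- Adjacency in a multigraph: some edge joins `x` and `y`. -/
def Adjm (G : Multigraph V E) (x y : V) : Prop := ∃ e, G.ends e = s(x, y)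

/-- The underlying simple graph of a multigraph. -/
def toSimple (G : Multigraph V E) : SimpleGraph V where
  Adj x y := x ≠ y ∧ G.Adjm x y
  symm := by
    constructor
    rintro x y ⟨hne, e, he⟩
    exact ⟨hne.symm, e, he.trans (Sym2.eq_swap)⟩
  loopless := by constructor; rintro x ⟨hne, -⟩; exact hne rfl

/-- Distance between two vertices (length of a shortest path). -/
noncomputable def dist (G : Multigraph V E) (x y : V) : ℕ := G.toSimple.dist x y

/-- The diameter of a multigraph. -/
noncomputable def diam (G : Multigraph V E) : ℕ := sSup {n | ∃ x y, G.dist x y = n}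

/-- The multigraph obtained by deleting the edge `e₀`. -/
def deleteEdge (G : Multigraph V E) (e₀ : E) : Multigraph V {e : E // e ≠ e₀} where
  ends e := G.ends e.1
  loopless e := G.loopless e.1

/-- A (connected) multigraph is bridgeless if deleting any single edge leaves it connected. -/
def Bridgeless (G : Multigraph V E) : Prop :=
  ∀ e : E, ((G.deleteEdge e).toSimple).Connected

/-- Walks in a multigraph, recording the edges used. -/
inductive Walk (G : Multigraph V E) : V → V → Type _
  | nil {v : V} : Walk G v v
  | cons {x y z : V} (e : E) (he : G.ends e = s(x, y)) (p : Walk G y z) : Walk G x z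

namespace Walk

variable {G : Multigraph V E}

/-- The length (number of edges) of a walk. -/
def length : ∀ {x y : V}, G.Walk x y → ℕ
  | _, _, .nil => 0
  | _, _, .cons _ _ p => p.length + 1

/-- The list of edges of a walk. -/
def edges : ∀ {x y : V}, G.Walk x y → List E
  | _, _, .nil => []
  | _, _, .cons e _ p => e :: p.edges

/-- The list of vertices of a walk. -/
def support : ∀ {x y : V}, G.Walk x y → List V
  | x, _, .nil => [x]
  | x, _, .cons _ _ p => x :: p.support

/-- A closed walk is a cycle if its edges are distinct and its vertices
(other than the repeated base point) are distinct. -/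
def IsCycle {v : V} (p : G.Walk v v) : Prop :=
  p.edges.Nodup ∧ p.support.tail.Nodup ∧ 0 < p.length

end Walk

/-- The edge girth of `e`: the length of a shortest cycle containing `e`. -/
noncomputable def edgeGirth (G : Multigraph V E) (e : E) : ℕ :=
  sInf {n | ∃ (v : V) (p : G.Walk v v), p.IsCycle ∧ e ∈ p.edges ∧ p.length = n}

/-- The maximum edge girth `g*(G)`. -/
noncomputable def maxEdgeGirth (G : Multigraph V E) : ℕ :=
  sSup (Set.range fun e => G.edgeGirth e)

/-- An orientation of a multigraph: each edge is assigned a direction. -/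
structure Orientation (G : Multigraph V E) where
  dir : E → V × V
  compat : ∀ e, s((dir e).1, (dir e).2) = G.ends e

/-- Arcs of an orientation. -/
def Orientation.DAdj {G : Multigraph V E} (o : G.Orientation) (x y : V) : Prop :=
  ∃ e, o.dir e = (x, y)

/-- Directed distance in an orientation (`⊤` if unreachable). -/
noncomputable def Orientation.ddist {G : Multigraph V E} (o : G.Orientation) (x y : V) : ℕ∞ :=
  sInf {n : ℕ∞ | ∃ l : List V, List.Chain o.DAdj x l ∧
    (x :: l).getLast (List.cons_ne_nil x l) = y ∧ (l.length : ℕ∞) = n}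

/-- An orientation is strong if every vertex is reachable from every vertex by a directed path. -/
def Orientation.IsStrong {G : Multigraph V E} (o : G.Orientation) : Prop :=
  ∀ x y : V, o.ddist x y ≠ ⊤

/-- The diameter of an orientation. -/
noncomputable def Orientation.odiam {G : Multigraph V E} (o : G.Orientation) : ℕ∞ :=
  ⨆ (x : V) (y : V), o.ddist x y

end Multigraph

namespace Multigraph

variable {V E : Type*}

/-- `S G u v i j` is the set of vertices at distance `i` from `u` and `j` from `v`. -/
noncomputable def S (G : Multigraph V E) (u v : V) (i j : ℕ) : Set V :=
  {w | G.dist w u = i ∧ G.dist w v = j}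

/-- The neighbourhood of a vertex. -/
def nbhd (G : Multigraph V E) (w : V) : Set V := {x | G.Adjm w x}

end Multigraph

namespace Multigraph

variable {V E : Type*} (G : Multigraph V E) (u v : V)

/-- `A' = {w ∈ S₁₂ : N(w) ⊆ S₁₂ ∪ {u}}`. -/
noncomputable def setA' : Set V := {w ∈ G.S u v 1 2 | G.nbhd w ⊆ G.S u v 1 2 ∪ {u}}
/-- `A = S₁₂ − A'`. -/
noncomputable def setA : Set V := G.S u v 1 2 \ G.setA' u v
/-- `B' = {w ∈ S₂₁ : N(w) ⊆ S₂₁ ∪ {v}}`. -/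
noncomputable def setB' : Set V := {w ∈ G.S u v 2 1 | G.nbhd w ⊆ G.S u v 2 1 ∪ {v}}
/-- `B = S₂₁ − B'`. -/
noncomputable def setB : Set V := G.S u v 2 1 \ G.setB' u v
/-- `I' = {w ∈ S₂₃ : N(w) ⊆ S₂₃ ∪ A}`. -/
noncomputable def setI' : Set V := {w ∈ G.S u v 2 3 | G.nbhd w ⊆ G.S u v 2 3 ∪ G.setA u v}
/-- `I = S₂₃ − I'`. -/
noncomputable def setI : Set V := G.S u v 2 3 \ G.setI' u v
/-- `J' = {w ∈ S₃₂ : N(w) ⊆ S₃₂ ∪ B}`. -/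
noncomputable def setJ' : Set V := {w ∈ G.S u v 3 2 | G.nbhd w ⊆ G.S u v 3 2 ∪ G.setB u v}
/-- `J = S₃₂ − J'`. -/
noncomputable def setJ : Set V := G.S u v 3 2 \ G.setJ' u v
/-- `K' = {w ∈ S₃₄ : N(w) ⊆ S₃₄ ∪ I}`. -/
noncomputable def setK' : Set V := {w ∈ G.S u v 3 4 | G.nbhd w ⊆ G.S u v 3 4 ∪ G.setI u v}
/-- `K = S₃₄ − K'`. -/
noncomputable def setK : Set V := G.S u v 3 4 \ G.setK' u v
/-- `L' = {w ∈ S₄₃ : N(w) ⊆ S₄₃ ∪ J}`. -/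
noncomputable def setL' : Set V := {w ∈ G.S u v 4 3 | G.nbhd w ⊆ G.S u v 4 3 ∪ G.setJ u v}
/-- `L = S₄₃ − L'`. -/
noncomputable def setL : Set V := G.S u v 4 3 \ G.setL' u v
/-- `M' = {w ∈ S₄₄ : exactly one edge of G joins w to S₃₃ ∪ K ∪ L}`. -/
noncomputable def setM' : Set V :=
  {w ∈ G.S u v 4 4 |
    ∃! e : E, ∃ x ∈ G.S u v 3 3 ∪ G.setK u v ∪ G.setL u v, G.ends e = s(w, x)}
/-- `M = S₄₄ − M'`. -/
noncomputable def setM : Set V := G.S u v 4 4 \ G.setM' u v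

end Multigraph


namespace Multigraph

lemma aux_dist_le_of_diam {V E : Type*} [Fintype V] (G : Multigraph V E)
    (hdiam : G.diam = 4) (x y : V) : G.dist x y ≤ 4 := by
  have hset : {n | ∃ x y, G.dist x y = n} =
      Set.range (fun p : V × V => G.dist p.1 p.2) := by
    ext n; constructor
    · rintro ⟨a, b, h⟩; exact ⟨(a, b), h⟩
    · rintro ⟨⟨a, b⟩, h⟩; exact ⟨a, b, h⟩
  have hfin : {n | ∃ x y, G.dist x y = n}.Finite := by
    rw [hset]; exact Set.finite_range _
  have : G.dist x y ≤ sSup {n | ∃ x y, G.dist x y = n} :=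
    le_csSup hfin.bddAbove ⟨x, y, rfl⟩
  rwa [show sSup {n | ∃ x y, G.dist x y = n} = 4 from hdiam] at this

lemma aux_exists_adj {V E : Type*} (G : Multigraph V E) (hconn : G.toSimple.Connected)
    {x t : V} {n : ℕ} (h : G.dist x t = n + 1) :
    ∃ y, G.Adjm x y ∧ G.dist y t = n := by
  obtain ⟨p, hp⟩ := hconn.exists_walk_length_eq_dist x t
  rw [show G.toSimple.dist x t = n + 1 from h] at hp
  cases p with
  | nil => simp at hp
  | cons hadj q =>
    rename_i y
    refine ⟨y, hadj.2, le_antisymm ?_ ?_⟩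
    · show G.toSimple.dist y t ≤ n
      have := SimpleGraph.dist_le q
      simp [SimpleGraph.Walk.length_cons] at hp
      omega
    · have h1 : G.toSimple.dist x y = 1 := SimpleGraph.dist_eq_one_iff_adj.mpr hadj
      have htri := hconn.dist_triangle (u := x) (v := y) (w := t)
      have h2 : G.toSimple.dist x t = n + 1 := h
      show n ≤ G.toSimple.dist y t
      omega

end Multigraph

/-- Let `G` be a bridgeless graph with `d(G) = 4` and let `uv` be an edge
with `l_G(uv) = g*(G) ≥ 6`. Then every vertex `w ∈ M'` has exactly one neighbour in `S₃₃`,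
i.e. `|N(w) ∩ S₃₃| = 1`. -/
theorem stmt13 {V E : Type*} [Fintype V] [Fintype E] (G : Multigraph V E)
    (hconn : G.toSimple.Connected) (hbridgeless : G.Bridgeless) (hdiam : G.diam = 4)
    (u v : V) (e : E) (he : G.ends e = s(u, v))
    (hmax : G.edgeGirth e = G.maxEdgeGirth) (h6 : 6 ≤ G.maxEdgeGirth) :
    ∀ w ∈ G.setM' u v, (G.nbhd w ∩ G.S u v 3 3).encard = 1 := by
  intro w hw
  obtain ⟨⟨hwu, hwv⟩, e₀, he₀, huq⟩ := hw
  have hle : ∀ x y : V, G.dist x y ≤ 4 := G.aux_dist_le_of_diam hdiam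
  have hne : ∀ {a b : V}, G.Adjm a b → a ≠ b := by
    rintro a b ⟨e', he'⟩ rfl
    exact G.loopless e' (he' ▸ (by simp : (s(a, a)).IsDiag))
  have hsymm : ∀ {a b : V}, G.Adjm a b → G.Adjm b a := by
    rintro a b ⟨e', he'⟩; exact ⟨e', he'.trans Sym2.eq_swap⟩
  have hdist1 : ∀ {a b : V}, G.Adjm a b → G.dist a b = 1 := by
    intro a b hab
    exact SimpleGraph.dist_eq_one_iff_adj.mpr ⟨hne hab, hab⟩
  have htri : ∀ a b c : V, G.dist a c ≤ G.dist a b + G.dist b c :=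
    fun a b c => hconn.dist_triangle
  -- a neighbour of w in S₃₄ lies in K
  have hK : ∀ z, G.Adjm w z → z ∈ G.S u v 3 4 → z ∈ G.setK u v := by
    intro z hwz hz
    refine ⟨hz, fun hz' => ?_⟩
    have hw' : w ∈ G.S u v 3 4 ∪ G.setI u v := hz'.2 (hsymm hwz)
    rcases hw' with h | h
    · exact absurd h.1 (by rw [hwu]; norm_num)
    · exact absurd h.1.1 (by rw [hwu]; norm_num)
  have hL : ∀ z, G.Adjm w z → z ∈ G.S u v 4 3 → z ∈ G.setL u v := by
    intro z hwz hz
    refine ⟨hz, fun hz' => ?_⟩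
    have hw' : w ∈ G.S u v 4 3 ∪ G.setJ u v := hz'.2 (hsymm hwz)
    rcases hw' with h | h
    · exact absurd h.2 (by rw [hwv]; norm_num)
    · exact absurd h.1.2 (by rw [hwv]; norm_num)
  -- any edge from w to a vertex of S₃₃ ∪ K ∪ L equals e₀
  have hkey : ∀ (e' : E) (z : V), G.ends e' = s(w, z) →
      z ∈ G.S u v 3 3 ∪ G.setK u v ∪ G.setL u v → e' = e₀ :=
    fun e' z hez hz => huq e' ⟨z, hz, hez⟩
  -- existence of a neighbour in S₃₃
  obtain ⟨x, hwx, hxu⟩ := G.aux_exists_adj hconn (n := 3) hwu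
  obtain ⟨y, hwy, hyv⟩ := G.aux_exists_adj hconn (n := 3) hwv
  have hxv : G.dist x v = 3 ∨ G.dist x v = 4 := by
    have h1 := htri w x v
    have := hdist1 hwx
    have := hle x v
    omega
  have hyu : G.dist y u = 3 ∨ G.dist y u = 4 := by
    have h1 := htri w y u
    have := hdist1 hwy
    have := hle y u
    omega
  have hz₀ : ∃ z₀, G.Adjm w z₀ ∧ z₀ ∈ G.S u v 3 3 := by
    rcases hxv with h3 | h4
    · exact ⟨x, hwx, hxu, h3⟩
    rcases hyu with h3 | h4'
    · exact ⟨y, hwy, h3, hyv⟩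
    -- both x ∈ S₃₄ and y ∈ S₄₃ : contradiction via uniqueness
    exfalso
    obtain ⟨ex, hex⟩ := id hwx
    obtain ⟨ey, hey⟩ := id hwy
    have hex0 : ex = e₀ := hkey ex x hex (Or.inl (Or.inr (hK x hwx ⟨hxu, h4⟩)))
    have hey0 : ey = e₀ := hkey ey y hey (Or.inr (hL y hwy ⟨h4', hyv⟩))
    have : s(w, x) = s(w, y) := by rw [← hex, ← hey, hex0, hey0]
    rw [Sym2.eq_iff] at this
    rcases this with ⟨-, hxy⟩ | ⟨hwy', -⟩
    · rw [hxy] at h4; omega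
    · rw [hwy'] at hwv; omega
  obtain ⟨z₀, hwz₀, hz₀3⟩ := hz₀
  rw [Set.encard_eq_one]
  refine ⟨z₀, Set.eq_singleton_iff_unique_mem.mpr ⟨⟨hwz₀, hz₀3⟩, ?_⟩⟩
  rintro z' ⟨hwz', hz'3⟩
  obtain ⟨e1, he1⟩ := id hwz'
  obtain ⟨e2, he2⟩ := id hwz₀
  have h1 : e1 = e₀ := hkey e1 z' he1 (Or.inl (Or.inl hz'3))
  have h2 : e2 = e₀ := hkey e2 z₀ he2 (Or.inl (Or.inl hz₀3))
  have : s(w, z') = s(w, z₀) := by rw [← he1, ← he2, h1, h2]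
  rw [Sym2.eq_iff] at this
  rcases this with ⟨-, h⟩ | ⟨h, -⟩
  · exact h
  · exfalso
    have h3 := hz₀3.1
    rw [← h, hwu] at h3
    omega
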